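/- A Tychonoff space X is an Ascoli space if, and only if, each point x ∈ X is contained in a dense subspace B_x of X which is an Ascoli space with the subspace topology. -/

import Mathlib

open Set Filter Topology

/-- A set `H` of continuous real-valued functions is equicontinuous. -/
def EquicontinuousSet {X : Type*} [TopologicalSpace X] (H : Set C(X, ℝ)) : Prop :=
  ∀ x : X, ∀ ε : ℝ, 0 < ε → ∃ U ∈ 𝓝 x, ∀ x' ∈ U, ∀ f ∈ H, |f x' - f x| < ε

/-- `X` is Ascoli: every compact subset of `C_k(X)` is equicontinuous. -/
def AscoliSpace (X : Type*) [TopologicalSpace X] : Prop :=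
  ∀ K : Set C(X, ℝ), IsCompact K → EquicontinuousSet K

/-- `X` is sequentially Ascoli: every convergent sequence in `C_k(X)` is equicontinuous. -/
def SeqAscoliSpace (X : Type*) [TopologicalSpace X] : Prop :=
  ∀ (f : ℕ → C(X, ℝ)) (g : C(X, ℝ)), Tendsto f atTop (𝓝 g) →
    EquicontinuousSet (Set.range f ∪ {g})

/-- A function is `k`-continuous if its restriction to every compact subset is continuous. -/
def KContinuous {X Y : Type*} [TopologicalSpace X] [TopologicalSpace Y] (f : X → Y) : Prop :=
  ∀ K : Set X, IsCompact K → ContinuousOn f K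

/-- `X` is a `k_ℝ`-space if every `k`-continuous real-valued function is continuous. -/
def KRSpace (X : Type*) [TopologicalSpace X] : Prop :=
  ∀ f : X → ℝ, KContinuous f → Continuous f

/-- `X` is an `s_ℝ`-space if every sequentially continuous real-valued function is continuous. -/
def SRSpace (X : Type*) [TopologicalSpace X] : Prop :=
  ∀ f : X → ℝ, SeqContinuous f → Continuous f

/-- A function on a product is separately continuous. -/
def SeparatelyContinuous {X K : Type*} [TopologicalSpace X] [TopologicalSpace K]
    (Φ : X × K → ℝ) : Prop :=
  (∀ x : X, Continuous fun k => Φ (x, k)) ∧ (∀ k : K, Continuous fun x => Φ (x, k))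

/-- `X` is pseudocompact: every continuous real-valued function on `X` is bounded. -/
def Pseudocompact (X : Type*) [TopologicalSpace X] : Prop :=
  ∀ f : X → ℝ, Continuous f → ∃ M : ℝ, ∀ x : X, |f x| ≤ M

/-- A subset `A` of `X` is functionally bounded if every continuous real-valued
function on `X` is bounded on `A`. -/
def FunctionallyBounded {X : Type*} [TopologicalSpace X] (A : Set X) : Prop :=
  ∀ f : X → ℝ, Continuous f → ∃ M : ℝ, ∀ a ∈ A, |f a| ≤ M

/-- An `R`-quotient map: a continuous surjection such that real-valued functions on the
codomain are continuous as soon as their composition with the map is continuous. -/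
def RQuotientMap {X Y : Type*} [TopologicalSpace X] [TopologicalSpace Y] (p : X → Y) : Prop :=
  Continuous p ∧ Function.Surjective p ∧ ∀ φ : Y → ℝ, Continuous (φ ∘ p) → Continuous φ

theorem ascoli_iff_dense_ascoli_subspaces {X : Type*} [TopologicalSpace X] [T35Space X] :
    AscoliSpace X ↔ ∀ x : X, ∃ B : Set X, x ∈ B ∧ Dense B ∧ AscoliSpace ↥B := by
  constructor
  · intro hX x
    refine ⟨Set.univ, mem_univ x, dense_univ, ?_⟩
    intro K hK ⟨y, hy⟩ ε hε
    -- transfer K to C(X, ℝ) via precomposition with the inclusion X → univ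
    set φ : C(X, ↥(Set.univ : Set X)) := ⟨fun z => ⟨z, trivial⟩, by continuity⟩
    have hK' : IsCompact ((fun f : C(↥(Set.univ : Set X), ℝ) => f.comp φ) '' K) :=
      hK.image (ContinuousMap.continuous_precomp φ)
    obtain ⟨V, hV, hV2⟩ := hX _ hK' y ε hε
    refine ⟨Subtype.val ⁻¹' V, ?_, ?_⟩
    · exact continuous_subtype_val.continuousAt.preimage_mem_nhds hV
    · rintro ⟨z, _⟩ hz f hf
      have := hV2 z hz (f.comp φ) ⟨f, hf, rfl⟩
      exact this
  · intro h K hK x ε hε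
    obtain ⟨B, hxB, hBd, hBA⟩ := h x
    set ι : C(↥B, X) := ⟨Subtype.val, continuous_subtype_val⟩
    have hK' : IsCompact ((fun f : C(X, ℝ) => f.comp ι) '' K) :=
      hK.image (ContinuousMap.continuous_precomp ι)
    obtain ⟨U, hU, hU2⟩ := hBA _ hK' ⟨x, hxB⟩ (ε/2) (by linarith)
    rw [mem_nhds_induced] at hU
    obtain ⟨W, hW, hUW⟩ := hU
    obtain ⟨V, hVW, hVo, hxV⟩ := mem_nhds_iff.mp hW
    refine ⟨V, hVo.mem_nhds hxV, ?_⟩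
    intro x' hx' f hf
    have hsub : V ∩ B ⊆ {y | |f y - f x| ≤ ε/2} := by
      rintro b ⟨hbV, hbB⟩
      have hb : (⟨b, hbB⟩ : ↥B) ∈ U := hUW (by exact hVW hbV)
      have := hU2 ⟨b, hbB⟩ hb (f.comp ι) ⟨f, hf, rfl⟩
      exact this.le
    have hcl : IsClosed {y | |f y - f x| ≤ ε/2} :=
      isClosed_le (by continuity) continuous_const
    have : x' ∈ closure (V ∩ B) := hBd.open_subset_closure_inter hVo hx'
    have : x' ∈ {y | |f y - f x| ≤ ε/2} := hcl.closure_subset (closure_mono hsub this)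
    calc |f x' - f x| ≤ ε/2 := this
      _ < ε := by linarith
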